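/- There is no [3,1] single quantum deletion error-correcting code: there do not exist a linear isometry Enc : ℂ² → (ℂ²)^{⊗3} and a CPTP map N from 4×4 complex matrices to 2×2 complex matrices such that N(Tr_i(Enc|φ⟩⟨φ|Enc†)) = |φ⟩⟨φ| for every unit vector |φ⟩ ∈ ℂ² and every i ∈ {1,2,3}. -/

import Mathlib

/- Common setup: (ℂ²)^{⊗n} is modeled as functions {0,1}ⁿ → ℂ, with computational
basis kets, outer products |u⟩⟨v|, and the partial trace over the i-th tensor factor. -/

open Matrix
open scoped ComplexConjugate ComplexOrder

noncomputable section

/-- The computational basis ket `|s⟩` for a bit string `s ∈ {0,1}ⁿ`. -/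
def ket {n : ℕ} (s : Fin n → Fin 2) : (Fin n → Fin 2) → ℂ :=
  fun x => if x = s then 1 else 0

/-- The outer product `|u⟩⟨v|`. -/
def outer {ι : Type*} (u v : ι → ℂ) : Matrix ι ι ℂ :=
  Matrix.of fun i j => u i * conj (v j)

/-- The partial trace over the `i`-th tensor factor (the single deletion error `D_i`);
it satisfies `ptrace i (A₁ ⊗ ⋯ ⊗ Aₙ) = Tr(A_i) • A₁ ⊗ ⋯ ⊗ A_{i-1} ⊗ A_{i+1} ⊗ ⋯ ⊗ Aₙ`. -/
def ptrace {m : ℕ} (i : Fin (m + 1))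
    (A : Matrix (Fin (m + 1) → Fin 2) (Fin (m + 1) → Fin 2) ℂ) :
    Matrix (Fin m → Fin 2) (Fin m → Fin 2) ℂ :=
  Matrix.of fun y y' => ∑ b : Fin 2, A (i.insertNth b y) (i.insertNth b y')

/-- The Choi matrix `Σ_{i,j} E_{ij} ⊗ N(E_{ij})` of a linear map `N` on matrices. -/
def choi {ι κ : Type*} [Fintype ι] [DecidableEq ι]
    (N : Matrix ι ι ℂ →ₗ[ℂ] Matrix κ κ ℂ) : Matrix (ι × κ) (ι × κ) ℂ :=
  Matrix.of fun p q => N (Matrix.single p.1 q.1 1) p.2 q.2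

/-- A linear map on matrices is CPTP if its Choi matrix is positive semidefinite
(complete positivity) and it preserves traces. -/
def IsCPTP {ι κ : Type*} [Fintype ι] [DecidableEq ι] [Fintype κ]
    (N : Matrix ι ι ℂ →ₗ[ℂ] Matrix κ κ ℂ) : Prop :=
  (choi N).PosSemidef ∧ ∀ A : Matrix ι ι ℂ, (N A).trace = A.trace

/-- Existence of an `[m+1, 1]` single quantum deletion error-correcting code:
a linear isometry `Enc : ℂ² → (ℂ²)^{⊗(m+1)}` (given by a matrix `E` with `EᴴE = 1`)
and a CPTP map `N` from `2^m × 2^m` matrices to `2 × 2` matrices such that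
`N(Tr_i(E|φ⟩⟨φ|Eᴴ)) = |φ⟩⟨φ|` for every unit vector `|φ⟩ ∈ ℂ²` and every deletion
position `i`. -/
def HasDelCode (m : ℕ) : Prop :=
  ∃ (E : Matrix (Fin (m + 1) → Fin 2) (Fin 2) ℂ)
    (N : Matrix (Fin m → Fin 2) (Fin m → Fin 2) ℂ →ₗ[ℂ] Matrix (Fin 2) (Fin 2) ℂ),
    Eᴴ * E = 1 ∧ IsCPTP N ∧
      ∀ φ : Fin 2 → ℂ, (∑ j, star (φ j) * φ j) = 1 →
        ∀ i : Fin (m + 1),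
          N (ptrace i (E * outer φ φ * Eᴴ)) = outer φ φ

open scoped InnerProductSpace

namespace NoDel

abbrev ι3 := Fin 3 → Fin 2
abbrev ι2 := Fin 2 → Fin 2
abbrev V := EuclideanSpace ℂ ι2

def sl (c : ι3 → ℂ) (i : Fin 3) (b : Fin 2) : V := WithLp.toLp 2 (fun y => c (i.insertNth b y))

lemma sl_apply (c : ι3 → ℂ) (i : Fin 3) (b : Fin 2) (y : ι2) : sl c i b y = c (i.insertNth b y) := rfl

def outerV (x y : V) : Matrix ι2 ι2 ℂ := Matrix.of fun p q => x p * conj (y q)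

variable {N : Matrix ι2 ι2 ℂ →ₗ[ℂ] Matrix (Fin 2) (Fin 2) ℂ}

def quad (N : Matrix ι2 ι2 ℂ →ₗ[ℂ] Matrix (Fin 2) (Fin 2) ℂ) (φ : Fin 2 → ℂ)
    (A : Matrix ι2 ι2 ℂ) : ℂ := star φ ⬝ᵥ ((N A) *ᵥ φ)

lemma sum_comm4 {α β γ δ M : Type*} [Fintype α] [Fintype β] [Fintype γ] [Fintype δ]
    [AddCommMonoid M] (F : α → β → γ → δ → M) :
    ∑ a : γ, ∑ p : α, ∑ b : δ, ∑ q : β, F p q a b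
      = ∑ p : α, ∑ q : β, ∑ a : γ, ∑ b : δ, F p q a b := by
  rw [Finset.sum_comm]
  refine Finset.sum_congr rfl fun p _ => ?_
  conv_rhs => rw [Finset.sum_comm]
  exact Finset.sum_congr rfl fun a _ => Finset.sum_comm

lemma sum_comm_pairs {α β γ δ M : Type*} [Fintype α] [Fintype β] [Fintype γ] [Fintype δ]
    [AddCommMonoid M] (F : α → β → γ → δ → M) :
    ∑ p : α, ∑ q : β, ∑ a : γ, ∑ b : δ, F p q a b
      = ∑ q : β, ∑ p : α, ∑ b : δ, ∑ a : γ, F p q a b := by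
  rw [Finset.sum_comm]
  refine Finset.sum_congr rfl fun q _ => ?_
  exact Finset.sum_congr rfl fun p _ => Finset.sum_comm

lemma N_entry (A : Matrix ι2 ι2 ℂ) (p q : Fin 2) :
    N A p q = ∑ a : ι2, ∑ b : ι2, A a b * choi N (a, p) (b, q) := by
  conv_lhs => rw [matrix_eq_sum_single A]
  rw [map_sum]
  simp only [Matrix.sum_apply]
  refine Finset.sum_congr rfl fun a _ => ?_
  rw [map_sum]
  simp only [Matrix.sum_apply]
  refine Finset.sum_congr rfl fun b _ => ?_
  have h1 : single a b (A a b) = A a b • single a b (1:ℂ) := by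
    ext i j
    simp [Matrix.single, Matrix.smul_apply, mul_ite]
  rw [h1, N.map_smul]
  simp [choi]

lemma quad_expand (φ : Fin 2 → ℂ) (x y : V) :
    quad N φ (outerV x y) = ∑ p : Fin 2, ∑ q : Fin 2, ∑ a : ι2, ∑ b : ι2,
      conj (φ p) * φ q * x a * conj (y b) * choi N (a, p) (b, q) := by
  simp only [quad, dotProduct, mulVec, Pi.star_apply, RCLike.star_def]
  refine Finset.sum_congr rfl fun p _ => ?_
  rw [Finset.mul_sum]
  refine Finset.sum_congr rfl fun q _ => ?_
  rw [N_entry]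
  simp only [Finset.sum_mul, Finset.mul_sum]
  refine Finset.sum_congr rfl fun a _ => ?_
  refine Finset.sum_congr rfl fun b _ => ?_
  simp only [outerV, Matrix.of_apply]
  ring

lemma quad_add (φ : Fin 2 → ℂ) (A B : Matrix ι2 ι2 ℂ) :
    quad N φ (A + B) = quad N φ A + quad N φ B := by
  simp [quad, map_add, Matrix.add_mulVec, dotProduct_add]
  ring

lemma quad_pos (hChoi : (choi N).PosSemidef) (φ : Fin 2 → ℂ) (x : V) :
    0 ≤ quad N φ (outerV x x) := by
  classical
  set z : ι2 × Fin 2 → ℂ := fun w => conj (x w.1) * φ w.2 with hz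
  have h := hChoi.dotProduct_mulVec_nonneg z
  have heq : quad N φ (outerV x x) = star z ⬝ᵥ (choi N *ᵥ z) := by
    rw [quad_expand]
    simp only [dotProduct, mulVec, Pi.star_apply, RCLike.star_def, hz,
      Fintype.sum_prod_type, Finset.mul_sum]
    rw [← sum_comm4 (fun p q a b => conj (φ p) * φ q * x a * conj (x b) * choi N (a, p) (b, q))]
    refine Finset.sum_congr rfl fun a _ => ?_
    refine Finset.sum_congr rfl fun p _ => ?_
    refine Finset.sum_congr rfl fun b _ => ?_
    refine Finset.sum_congr rfl fun q _ => ?_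
    simp only [_root_.map_mul, Complex.conj_conj]
    ring
  rw [heq]; exact h

lemma quad_conj (hChoi : (choi N).PosSemidef) (φ : Fin 2 → ℂ) (x y : V) :
    quad N φ (outerV x y) = conj (quad N φ (outerV y x)) := by
  rw [quad_expand, quad_expand]
  simp only [map_sum, _root_.map_mul, Complex.conj_conj]
  rw [sum_comm_pairs (fun p q a b => conj (φ p) * φ q * x a * conj (y b) * choi N (a, p) (b, q))]
  refine Finset.sum_congr rfl fun q _ => ?_
  refine Finset.sum_congr rfl fun p _ => ?_
  refine Finset.sum_congr rfl fun b _ => ?_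
  refine Finset.sum_congr rfl fun a _ => ?_
  have hh : conj (choi N (b, q) (a, p)) = choi N (a, p) (b, q) := by
    simpa using hChoi.1.apply (a, p) (b, q)
  rw [← hh]
  ring

lemma quad_le_norm (hChoi : (choi N).PosSemidef) (hTr : ∀ A, (N A).trace = A.trace)
    {φ : Fin 2 → ℂ} (hφ : (∑ j, star (φ j) * φ j) = 1) (x : V) :
    quad N φ (outerV x x) ≤ ∑ y : ι2, x y * conj (x y) := by
  have hφ' : conj (φ 0) * φ 0 + conj (φ 1) * φ 1 = 1 := by
    simpa [Fin.sum_univ_two] using hφ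
  set ψ : Fin 2 → ℂ := ![-conj (φ 1), conj (φ 0)] with hψ
  have h0 : 0 ≤ quad N ψ (outerV x x) := quad_pos hChoi ψ x
  have htr : (N (outerV x x)).trace = ∑ y : ι2, x y * conj (x y) := by
    rw [hTr]
    simp [Matrix.trace, Matrix.diag, outerV]
  have hsum : quad N φ (outerV x x) + quad N ψ (outerV x x) = (N (outerV x x)).trace := by
    set M := N (outerV x x) with hM
    simp only [quad, dotProduct, mulVec, Pi.star_apply, RCLike.star_def, Fin.sum_univ_two,
      Matrix.trace_fin_two, hψ]
    simp only [Matrix.cons_val_zero, Matrix.cons_val_one, Matrix.head_cons, map_neg,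
      Complex.conj_conj]
    linear_combination (M 0 0 + M 1 1) * hφ'
  calc quad N φ (outerV x x) ≤ quad N φ (outerV x x) + quad N ψ (outerV x x) :=
        le_add_of_nonneg_right h0
    _ = _ := by rw [hsum, htr]

/-- Cauchy-Schwarz at zero for an abstract nonnegative sesquilinear-like form. -/
lemma cs0 (f : V → V → ℂ)
    (hadd : ∀ a a' b, f (a + a') b = f a b + f a' b)
    (hsmul : ∀ (α : ℂ) a b, f (α • a) b = conj α * f a b)
    (hsym : ∀ a b, f b a = conj (f a b))
    (hpos : ∀ a, 0 ≤ f a a)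
    (x y : V) (hx : f x x = 0) : f x y = 0 := by
  by_contra hF
  have hadd' : ∀ a b b', f a (b + b') = f a b + f a b' := by
    intro a b b'
    rw [hsym, hadd, hsym a b, hsym a b']
    simp [map_add]
  have hsmul' : ∀ (α : ℂ) a b, f a (α • b) = α * f a b := by
    intro α a b
    rw [hsym, hsmul, hsym a b]
    simp [_root_.map_mul]
  have hyy := hpos y
  rw [Complex.le_def] at hyy
  have hur : 0 ≤ (f y y).re := by simpa using hyy.1
  set u := (f y y).re with hu
  have hyy' : f y y = ((u : ℝ) : ℂ) := by
    apply Complex.ext <;> simp [hu, ← hyy.2]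
  have hkey : ∀ r : ℝ,
      0 ≤ -2*r*Complex.normSq (f x y) + r^2*Complex.normSq (f x y)*u := by
    intro r
    have hexp := hpos (x + (-(r:ℂ) * conj (f x y)) • y)
    have hval : f (x + (-(r:ℂ) * conj (f x y)) • y) (x + (-(r:ℂ) * conj (f x y)) • y)
        = ((-2*r*Complex.normSq (f x y) + r^2*Complex.normSq (f x y)*u : ℝ) : ℂ) := by
      rw [hadd, hsmul, hadd', hadd', hsmul', hsmul', hx, hsym x y]
      rw [hyy']
      simp only [_root_.map_mul, map_neg, Complex.conj_conj, Complex.conj_ofReal]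
      push_cast [Complex.normSq_eq_conj_mul_self]
      ring
    rw [hval] at hexp
    exact Complex.zero_le_real.mp hexp
  have hFpos : 0 < Complex.normSq (f x y) := Complex.normSq_pos.2 hF
  have h := hkey (u + 1)⁻¹
  have hrpos : (0:ℝ) < (u+1)⁻¹ := by positivity
  have hru : (u+1)⁻¹ * u < 1 := by
    rw [inv_mul_lt_iff₀ (by positivity)]
    linarith
  have hrs : 0 < (u+1)⁻¹ * Complex.normSq (f x y) := mul_pos hrpos hFpos
  nlinarith [h, hrs, hru, mul_lt_mul_of_pos_left hru hrs]

section Engine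

variable (E : Matrix ι3 (Fin 2) ℂ)

lemma EouterE (φ : Fin 2 → ℂ) (s t : ι3) :
    (E * outer φ φ * Eᴴ) s t = (E *ᵥ φ) s * conj ((E *ᵥ φ) t) := by
  simp only [Matrix.mul_apply, outer, Matrix.of_apply, conjTranspose_apply, mulVec, dotProduct,
    RCLike.star_def, map_sum]
  rw [Finset.sum_mul_sum]
  rw [Finset.sum_comm]
  refine Finset.sum_congr rfl fun k _ => ?_
  rw [Finset.sum_mul]
  refine Finset.sum_congr rfl fun j _ => ?_
  simp only [_root_.map_mul, Finset.sum_mul, Finset.mul_sum]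
  ring

lemma ptrace_decomp (φ : Fin 2 → ℂ) (i : Fin 3) :
    ptrace i (E * outer φ φ * Eᴴ)
      = outerV (sl (E *ᵥ φ) i 0) (sl (E *ᵥ φ) i 0)
        + outerV (sl (E *ᵥ φ) i 1) (sl (E *ᵥ φ) i 1) := by
  ext y y'
  simp [ptrace, EouterE, outerV, sl, Fin.sum_univ_two]

lemma sumsplit (i : Fin 3) (f : ι3 → ℂ) :
    ∑ s, f s = ∑ b : Fin 2, ∑ y : ι2, f (i.insertNth b y) := by
  rw [← (Fin.insertNthEquiv (fun _ => Fin 2) i).sum_comp (g := f)]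
  rw [Fintype.sum_prod_type]
  rfl

lemma slice_norm_sum (hE : Eᴴ * E = 1) {φ : Fin 2 → ℂ}
    (hφ : (∑ j, star (φ j) * φ j) = 1) (i : Fin 3) :
    ∑ b : Fin 2, ∑ y : ι2, (sl (E *ᵥ φ) i b) y * conj ((sl (E *ᵥ φ) i b) y) = 1 := by
  have h1 : ∀ b y, (sl (E *ᵥ φ) i b) y * conj ((sl (E *ᵥ φ) i b) y)
      = (fun s => (E *ᵥ φ) s * conj ((E *ᵥ φ) s)) (i.insertNth b y) := fun b y => rfl
  simp only [h1]
  rw [← sumsplit i (fun s => (E *ᵥ φ) s * conj ((E *ᵥ φ) s))]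
  have h2 : ∑ s, (E *ᵥ φ) s * conj ((E *ᵥ φ) s) = star (E *ᵥ φ) ⬝ᵥ (E *ᵥ φ) := by
    simp only [dotProduct, Pi.star_apply, RCLike.star_def]
    exact Finset.sum_congr rfl fun s _ => by ring
  rw [h2, Matrix.star_mulVec, ← Matrix.dotProduct_mulVec, Matrix.mulVec_mulVec, hE,
    Matrix.one_mulVec]
  simpa using hφ

variable {E}

lemma quad_decode_self
    (hdec : ∀ φ : Fin 2 → ℂ, (∑ j, star (φ j) * φ j) = 1 →
      ∀ i : Fin 3, N (ptrace i (E * outer φ φ * Eᴴ)) = outer φ φ)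
    {φ : Fin 2 → ℂ} (hφ : (∑ j, star (φ j) * φ j) = 1) (i : Fin 3) :
    quad N φ (ptrace i (E * outer φ φ * Eᴴ)) = 1 := by
  rw [quad, hdec φ hφ i]
  have hφ' : conj (φ 0) * φ 0 + conj (φ 1) * φ 1 = 1 := by
    simpa [Fin.sum_univ_two] using hφ
  simp only [dotProduct, mulVec, Pi.star_apply, RCLike.star_def, Fin.sum_univ_two, outer,
    Matrix.of_apply]
  linear_combination (conj (φ 0) * φ 0 + conj (φ 1) * φ 1 + 1) * hφ'

lemma quad_decode_orth
    (hdec : ∀ φ : Fin 2 → ℂ, (∑ j, star (φ j) * φ j) = 1 →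
      ∀ i : Fin 3, N (ptrace i (E * outer φ φ * Eᴴ)) = outer φ φ)
    {φ ψ : Fin 2 → ℂ} (hψ : (∑ j, star (ψ j) * ψ j) = 1)
    (hor : (∑ j, star (φ j) * ψ j) = 0) (i : Fin 3) :
    quad N φ (ptrace i (E * outer ψ ψ * Eᴴ)) = 0 := by
  rw [quad, hdec ψ hψ i]
  have hor' : conj (φ 0) * ψ 0 + conj (φ 1) * ψ 1 = 0 := by
    simpa [Fin.sum_univ_two] using hor
  simp only [dotProduct, mulVec, Pi.star_apply, RCLike.star_def, Fin.sum_univ_two, outer,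
    Matrix.of_apply]
  linear_combination (conj (ψ 0) * φ 0 + conj (ψ 1) * φ 1) * hor'

/-- The key engine: slices of encodings of orthogonal unit vectors are orthogonal. -/
lemma engine (hE : Eᴴ * E = 1) (hChoi : (choi N).PosSemidef)
    (hTr : ∀ A, (N A).trace = A.trace)
    (hdec : ∀ φ : Fin 2 → ℂ, (∑ j, star (φ j) * φ j) = 1 →
      ∀ i : Fin 3, N (ptrace i (E * outer φ φ * Eᴴ)) = outer φ φ)
    {φ ψ : Fin 2 → ℂ} (hφ : (∑ j, star (φ j) * φ j) = 1)
    (hψ : (∑ j, star (ψ j) * ψ j) = 1)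
    (hor : (∑ j, star (φ j) * ψ j) = 0)
    (i j : Fin 3) (b bq : Fin 2) :
    ⟪sl (E *ᵥ φ) i b, sl (E *ᵥ ψ) j bq⟫_ℂ = 0 := by
  set x : Fin 2 → V := fun b => sl (E *ᵥ φ) i b with hxdef
  set y : Fin 2 → V := fun b => sl (E *ᵥ ψ) j b with hydef
  -- quads of x slices equal their norms
  have hsum1 : quad N φ (outerV (x 0) (x 0)) + quad N φ (outerV (x 1) (x 1)) = 1 := by
    rw [← quad_add, ← ptrace_decomp]
    exact quad_decode_self hdec hφ i
  have hnorm : (∑ yy : ι2, (x 0) yy * conj ((x 0) yy))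
      + (∑ yy : ι2, (x 1) yy * conj ((x 1) yy)) = 1 := by
    have := slice_norm_sum E hE hφ i
    simpa [Fin.sum_univ_two] using this
  have hle : ∀ b, quad N φ (outerV (x b) (x b)) ≤ ∑ yy : ι2, (x b) yy * conj ((x b) yy) :=
    fun b => quad_le_norm hChoi hTr hφ (x b)
  have hquadeq : ∀ b, quad N φ (outerV (x b) (x b)) = ∑ yy : ι2, (x b) yy * conj ((x b) yy) := by
    intro b
    have h0 := hle 0
    have h1 := hle 1
    have e : quad N φ (outerV (x 0) (x 0)) + quad N φ (outerV (x 1) (x 1))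
        = (∑ yy : ι2, (x 0) yy * conj ((x 0) yy)) + (∑ yy : ι2, (x 1) yy * conj ((x 1) yy)) := by
      rw [hsum1, hnorm]
    fin_cases b
    · by_contra hne
      have hlt : quad N φ (outerV (x 0) (x 0)) < ∑ yy : ι2, (x 0) yy * conj ((x 0) yy) :=
        lt_of_le_of_ne h0 hne
      have := add_lt_add_of_lt_of_le hlt h1
      rw [e] at this
      exact lt_irrefl _ this
    · by_contra hne
      have hlt : quad N φ (outerV (x 1) (x 1)) < ∑ yy : ι2, (x 1) yy * conj ((x 1) yy) :=
        lt_of_le_of_ne h1 hne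
      have := add_lt_add_of_le_of_lt h0 hlt
      rw [e] at this
      exact lt_irrefl _ this
  -- quads of y slices vanish
  have hsum0 : quad N φ (outerV (y 0) (y 0)) + quad N φ (outerV (y 1) (y 1)) = 0 := by
    rw [← quad_add, ← ptrace_decomp]
    exact quad_decode_orth hdec hψ hor j
  have hyzero : ∀ b, quad N φ (outerV (y b) (y b)) = 0 := by
    intro b
    have h0 := quad_pos hChoi φ (y 0)
    have h1 := quad_pos hChoi φ (y 1)
    fin_cases b
    · by_contra hne
      have : 0 < quad N φ (outerV (y 0) (y 0)) := lt_of_le_of_ne h0 (Ne.symm hne)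
      have := add_lt_add_of_lt_of_le this h1
      rw [hsum0] at this
      simp at this
    · by_contra hne
      have : 0 < quad N φ (outerV (y 1) (y 1)) := lt_of_le_of_ne h1 (Ne.symm hne)
      have := add_lt_add_of_le_of_lt h0 this
      rw [hsum0] at this
      simp at this
  -- first CS application: quad (outerV (y bq) (x b)) = 0
  have outerV_add : ∀ (a a' b : V), outerV (a + a') b = outerV a b + outerV a' b := by
    intro a a' b; ext p q; simp [outerV, PiLp.add_apply]; ring
  have outerV_smul : ∀ (α : ℂ) (a b : V), outerV (α • a) b = α • outerV a b := by
    intro α a b; ext p q; simp [outerV, PiLp.smul_apply]; ring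
  have quad_smul : ∀ (α : ℂ) A, quad N φ (α • A) = α * quad N φ A := by
    intro α A
    simp [quad, _root_.map_smul, Matrix.smul_mulVec, dotProduct_smul]
    ring
  set g : V → V → ℂ := fun a b' => quad N φ (outerV b' a) with hg
  have hg1 : g (y bq) (x b) = 0 := by
    apply cs0
    · intro a a' b'; rw [hg]; simp only
      have : outerV b' (a + a') = outerV b' a + outerV b' a' := by
        ext p q; simp [outerV, PiLp.add_apply]; ring
      rw [this, quad_add]
    · intro α a b'; rw [hg]; simp only
      have : outerV b' (α • a) = conj α • outerV b' a := by
        ext p q; simp [outerV, PiLp.smul_apply]; ring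
      rw [this, quad_smul]
    · intro a b'; exact quad_conj hChoi φ a b'
    · intro a; exact quad_pos hChoi φ a
    · exact hyzero bq
  -- second CS application with f = inner minus quad
  set f : V → V → ℂ := fun a b' => ⟪a, b'⟫_ℂ - quad N φ (outerV b' a) with hf
  have hf1 : f (x b) (y bq) = 0 := by
    apply cs0
    · intro a a' b'
      rw [hf]; simp only
      have h1 : outerV b' (a + a') = outerV b' a + outerV b' a' := by
        ext p q; simp [outerV, PiLp.add_apply]; ring
      rw [inner_add_left, h1, quad_add]; ring
    · intro α a b'
      rw [hf]; simp only
      have h1 : outerV b' (α • a) = conj α • outerV b' a := by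
        ext p q; simp [outerV, PiLp.smul_apply]; ring
      rw [inner_smul_left, h1, quad_smul]; ring
    · intro a b'
      rw [hf]; simp only
      rw [← inner_conj_symm, quad_conj hChoi φ]
      simp [map_sub]
    · intro a
      rw [hf]; simp only
      have : ⟪a, a⟫_ℂ = ∑ yy : ι2, a yy * conj (a yy) := by
        simp only [PiLp.inner_apply, RCLike.inner_apply, RCLike.star_def]
      rw [this]
      exact sub_nonneg.mpr (quad_le_norm hChoi hTr hφ a)
    · rw [hf]; simp only
      rw [hquadeq b]
      have : ⟪x b, x b⟫_ℂ = ∑ yy : ι2, (x b) yy * conj ((x b) yy) := by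
        simp only [PiLp.inner_apply, RCLike.inner_apply, RCLike.star_def]
      rw [this]; ring
  have hg2 : quad N φ (outerV (y bq) (x b)) = 0 := by
    rw [quad_conj hChoi φ]
    rw [show quad N φ (outerV (x b) (y bq)) = 0 from hg1]
    simp
  rw [hf] at hf1
  simp only at hf1
  rw [hg2] at hf1
  simpa using hf1

end Engine

section StepII

variable {E : Matrix ι3 (Fin 2) ℂ}

/-- Step II: the full orthogonality/Gram package for the two columns of `E`. -/
lemma slice_package (hE : Eᴴ * E = 1) (hChoi : (choi N).PosSemidef)
    (hTr : ∀ A, (N A).trace = A.trace)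
    (hdec : ∀ φ : Fin 2 → ℂ, (∑ j, star (φ j) * φ j) = 1 →
      ∀ i : Fin 3, N (ptrace i (E * outer φ φ * Eᴴ)) = outer φ φ) :
    (∀ i j : Fin 3, ∀ b bq : Fin 2,
        ⟪sl (fun s => E s 0) i b, sl (fun s => E s 1) j bq⟫_ℂ = 0) ∧
    (∀ i j : Fin 3, ∀ b bq : Fin 2,
        ⟪sl (fun s => E s 1) i b, sl (fun s => E s 0) j bq⟫_ℂ = 0) ∧
    (∀ i j : Fin 3, ∀ b bq : Fin 2,
        ⟪sl (fun s => E s 0) i b, sl (fun s => E s 0) j bq⟫_ℂ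
          = ⟪sl (fun s => E s 1) i b, sl (fun s => E s 1) j bq⟫_ℂ) := by
  set c : ι3 → ℂ := fun s => E s 0 with hcdef
  set d : ι3 → ℂ := fun s => E s 1 with hddef
  set e0 : Fin 2 → ℂ := ![1, 0] with he0
  set e1 : Fin 2 → ℂ := ![0, 1] with he1
  have hu0 : (∑ j, star (e0 j) * e0 j) = 1 := by
    simp [he0, Fin.sum_univ_two]
  have hu1 : (∑ j, star (e1 j) * e1 j) = 1 := by
    simp [he1, Fin.sum_univ_two]
  have hor01 : (∑ j, star (e0 j) * e1 j) = 0 := by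
    simp [he0, he1, Fin.sum_univ_two]
  have hor10 : (∑ j, star (e1 j) * e0 j) = 0 := by
    simp [he0, he1, Fin.sum_univ_two]
  have hc : E *ᵥ e0 = c := by
    funext s
    simp [mulVec, dotProduct, Fin.sum_univ_two, he0, hcdef]
  have hd : E *ᵥ e1 = d := by
    funext s
    simp [mulVec, dotProduct, Fin.sum_univ_two, he1, hddef]
  have hF1 : ∀ i j : Fin 3, ∀ b bq : Fin 2, ⟪sl c i b, sl d j bq⟫_ℂ = 0 := by
    intro i j b bq
    have h := engine hE hChoi hTr hdec hu0 hu1 hor01 i j b bq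
    rwa [hc, hd] at h
  have hF1' : ∀ i j : Fin 3, ∀ b bq : Fin 2, ⟪sl d i b, sl c j bq⟫_ℂ = 0 := by
    intro i j b bq
    have h := engine hE hChoi hTr hdec hu1 hu0 hor10 i j b bq
    rwa [hc, hd] at h
  refine ⟨hF1, hF1', ?_⟩
  -- F2 via the ± basis
  set rr : ℝ := (Real.sqrt 2)⁻¹ with hrrdef
  have hrr : ((rr:ℂ)) * ((rr:ℂ)) = 1/2 := by
    have h1 : rr * rr = 1/2 := by
      rw [hrrdef, ← mul_inv, Real.mul_self_sqrt (by norm_num : (0:ℝ) ≤ 2)]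
      norm_num
    calc ((rr:ℂ)) * ((rr:ℂ)) = ((rr * rr : ℝ) : ℂ) := by push_cast; ring
      _ = 1/2 := by rw [h1]; norm_num
  have hrr2 : ((rr:ℂ)) * ((rr:ℂ)) ≠ 0 := by rw [hrr]; norm_num
  set φp : Fin 2 → ℂ := ![(rr:ℂ), (rr:ℂ)] with hφp
  set φm : Fin 2 → ℂ := ![(rr:ℂ), -(rr:ℂ)] with hφm
  have hup : (∑ j, star (φp j) * φp j) = 1 := by
    simp only [Fin.sum_univ_two, hφp, Matrix.cons_val_zero, Matrix.cons_val_one,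
      Matrix.head_cons, RCLike.star_def, Complex.conj_ofReal]
    linear_combination 2 * hrr
  have hum : (∑ j, star (φm j) * φm j) = 1 := by
    simp only [Fin.sum_univ_two, hφm, Matrix.cons_val_zero, Matrix.cons_val_one,
      Matrix.head_cons, RCLike.star_def, map_neg, Complex.conj_ofReal]
    linear_combination 2 * hrr
  have horpm : (∑ j, star (φp j) * φm j) = 0 := by
    simp only [Fin.sum_univ_two, hφp, hφm, Matrix.cons_val_zero, Matrix.cons_val_one,
      Matrix.head_cons, RCLike.star_def, Complex.conj_ofReal]
    ring
  have hEp : ∀ i b, sl (E *ᵥ φp) i b = (rr:ℂ) • (sl c i b) + (rr:ℂ) • (sl d i b) := by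
    intro i b
    apply WithLp.ofLp_injective; funext y
    have : (E *ᵥ φp) (i.insertNth b y) = (rr:ℂ) * c (i.insertNth b y) + (rr:ℂ) * d (i.insertNth b y) := by
      simp only [mulVec, dotProduct, Fin.sum_univ_two, hφp, Matrix.cons_val_zero,
        Matrix.cons_val_one, Matrix.head_cons, hcdef, hddef]
      ring
    simp only [sl, PiLp.add_apply, PiLp.smul_apply, smul_eq_mul]
    exact this
  have hEm : ∀ i b, sl (E *ᵥ φm) i b = (rr:ℂ) • (sl c i b) - (rr:ℂ) • (sl d i b) := by
    intro i b
    apply WithLp.ofLp_injective; funext y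
    have : (E *ᵥ φm) (i.insertNth b y) = (rr:ℂ) * c (i.insertNth b y) - (rr:ℂ) * d (i.insertNth b y) := by
      simp only [mulVec, dotProduct, Fin.sum_univ_two, hφm, Matrix.cons_val_zero,
        Matrix.cons_val_one, Matrix.head_cons, hcdef, hddef]
      ring
    simp only [sl, PiLp.sub_apply, PiLp.smul_apply, smul_eq_mul]
    exact this
  have expand : ∀ A B A' B' : V,
      ⟪(rr:ℂ) • A + (rr:ℂ) • B, (rr:ℂ) • A' - (rr:ℂ) • B'⟫_ℂ
        = ((rr:ℂ) * (rr:ℂ)) * (⟪A, A'⟫_ℂ - ⟪A, B'⟫_ℂ + ⟪B, A'⟫_ℂ - ⟪B, B'⟫_ℂ) := by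
    intro A B A' B'
    rw [inner_add_left, inner_sub_right, inner_sub_right, inner_smul_left, inner_smul_left,
      inner_smul_right, inner_smul_right, inner_smul_right, inner_smul_right,
      inner_smul_left, inner_smul_left]
    simp only [Complex.conj_ofReal]
    ring
  intro i j b bq
  have h := engine hE hChoi hTr hdec hup hum horpm i j b bq
  rw [hEp, hEm, expand] at h
  rw [hF1 i j b bq, hF1' i j b bq] at h
  have h4 : ((rr:ℂ) * (rr:ℂ)) * (⟪sl c i b, sl c j bq⟫_ℂ - ⟪sl d i b, sl d j bq⟫_ℂ) = 0 := by
    linear_combination h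
  rcases mul_eq_zero.mp h4 with h5 | h5
  · exact absurd h5 hrr2
  · linear_combination h5

lemma col_norm (hE : Eᴴ * E = 1) (k : Fin 2) :
    (∑ s, conj (E s k) * E s k) = 1 := by
  have h : (Eᴴ * E) k k = 1 := by rw [hE]; simp
  rw [← h, Matrix.mul_apply]
  exact Finset.sum_congr rfl fun s _ => by simp [conjTranspose_apply, RCLike.star_def]

end StepII

section StepIII

lemma fin2 (i : Fin 2) : i = 0 ∨ i = 1 := by omega

lemma eta2 (y : ι2) : ![y 0, y 1] = y := by
  funext k; fin_cases k <;> rfl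

lemma ins0 (b : Fin 2) (y : ι2) : (0 : Fin 3).insertNth b y = ![b, y 0, y 1] := by
  funext k; fin_cases k <;> rfl

lemma ins1 (b : Fin 2) (y : ι2) : (1 : Fin 3).insertNth b y = ![y 0, b, y 1] := by
  funext k; fin_cases k <;> rfl

lemma ins2 (b : Fin 2) (y : ι2) : (2 : Fin 3).insertNth b y = ![y 0, y 1, b] := by
  funext k; fin_cases k <;> rfl

lemma sl0c (c : ι3 → ℂ) (b : Fin 2) (y : ι2) : sl c 0 b y = c ![b, y 0, y 1] := by
  rw [sl_apply, ins0]

lemma sl1c (c : ι3 → ℂ) (b : Fin 2) (y : ι2) : sl c 1 b y = c ![y 0, b, y 1] := by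
  rw [sl_apply, ins1]

lemma sl2c (c : ι3 → ℂ) (b : Fin 2) (y : ι2) : sl c 2 b y = c ![y 0, y 1, b] := by
  rw [sl_apply, ins2]

/-- linear independence of a pair, concretely. -/
def Indep (a b : V) : Prop := ∀ s t : ℂ, s • a + t • b = 0 → s = 0 ∧ t = 0

lemma ext4 {v w : V} (h00 : v ![0,0] = w ![0,0]) (h01 : v ![0,1] = w ![0,1])
    (h10 : v ![1,0] = w ![1,0]) (h11 : v ![1,1] = w ![1,1]) : v = w := by
  apply WithLp.ofLp_injective; funext y
  have hy : v ![y 0, y 1] = w ![y 0, y 1] := by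
    rcases fin2 (y 0) with h | h <;> rcases fin2 (y 1) with h' | h' <;> rw [h, h'] <;>
      assumption
  rwa [eta2] at hy

lemma rep_of_dep {x0 x1 : V} (h : ¬ Indep x0 x1) :
    ∃ (a : Fin 2 → ℂ) (g : V) (b₀ : Fin 2), a b₀ = 1 ∧ x0 = a 0 • g ∧ x1 = a 1 • g := by
  rw [Indep] at h
  push_neg at h
  obtain ⟨s, t, hst, hne⟩ := h
  by_cases hs : s = 0
  · have ht : t ≠ 0 := hne hs
    have hx1 : x1 = 0 := by
      have : t • x1 = 0 := by rw [hs] at hst; simpa using hst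
      exact (smul_eq_zero.mp this).resolve_left ht
    refine ⟨![1, 0], x0, 0, by simp, by simp, by simp [hx1]⟩
  · have hx0 : x0 = (-t/s) • x1 := by
      have h1 : s • x0 = -(t • x1) := by
        rw [← sub_eq_zero]; rw [sub_neg_eq_add]; exact hst
      have h2 := congrArg (fun z => s⁻¹ • z) h1
      simp only [smul_smul, inv_mul_cancel₀ hs, one_smul, smul_neg] at h2
      rw [h2, ← neg_smul]
      congr 1
      field_simp
    exact ⟨![(-t/s), 1], x1, 1, by simp, by simpa using hx0, by simp⟩

lemma dep_of_scaled (x0 x1 w : V) (k : Fin 2 → ℂ)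
    (h0 : x0 = k 0 • w) (h1 : x1 = k 1 • w) (hind : Indep x0 x1) : False := by
  have hcombo : (k 1) • x0 + (-(k 0)) • x1 = 0 := by
    rw [h0, h1, smul_smul, smul_smul]
    rw [← add_smul]
    rw [show k 1 * k 0 + -k 0 * k 1 = 0 by ring, zero_smul]
  obtain ⟨hk1, hk0⟩ := hind _ _ hcombo
  have hk0' : k 0 = 0 := by simpa using hk0
  have hx0 : x0 = 0 := by rw [h0, hk0', zero_smul]
  obtain ⟨h1', -⟩ := hind 1 0 (by rw [hx0]; simp)
  exact one_ne_zero h1'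

lemma indep_transfer {a b a' b' : V}
    (h00 : ⟪a, a⟫_ℂ = ⟪a', a'⟫_ℂ) (h01 : ⟪a, b⟫_ℂ = ⟪a', b'⟫_ℂ)
    (h10 : ⟪b, a⟫_ℂ = ⟪b', a'⟫_ℂ) (h11 : ⟪b, b⟫_ℂ = ⟪b', b'⟫_ℂ)
    (h : Indep a b) : Indep a' b' := by
  intro s t hst
  have hz : ⟪s • a + t • b, s • a + t • b⟫_ℂ = 0 := by
    have e : ⟪s • a + t • b, s • a + t • b⟫_ℂ = ⟪s • a' + t • b', s • a' + t • b'⟫_ℂ := by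
      simp only [inner_add_left, inner_add_right, inner_smul_left, inner_smul_right,
        h00, h01, h10, h11]
    rw [e, hst]
    simp
  exact h s t (inner_self_eq_zero.mp hz)

lemma dim4 {u0 u1 v0 v1 w : V}
    (hu : Indep u0 u1) (hv : Indep v0 v1)
    (o00 : ⟪v0, u0⟫_ℂ = 0) (o01 : ⟪v0, u1⟫_ℂ = 0)
    (o10 : ⟪v1, u0⟫_ℂ = 0) (o11 : ⟪v1, u1⟫_ℂ = 0)
    (ow0 : ⟪v0, w⟫_ℂ = 0) (ow1 : ⟪v1, w⟫_ℂ = 0) :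
    ∃ α β : ℂ, α • u0 + β • u1 = w := by
  have huLI : LinearIndependent ℂ ![u0, u1] := by
    rw [LinearIndependent.pair_iff]
    intro s t hst
    exact hu s t hst
  have hvLI : LinearIndependent ℂ ![v0, v1] := by
    rw [LinearIndependent.pair_iff]
    intro s t hst
    exact hv s t hst
  set U : Submodule ℂ V := Submodule.span ℂ {u0, u1} with hU
  set W : Submodule ℂ V := Submodule.span ℂ {v0, v1} with hW
  have hrange_u : Set.range ![u0, u1] = {u0, u1} := by
    ext z
    simp [Fin.exists_fin_two, eq_comm, or_comm]
  have hrange_v : Set.range ![v0, v1] = {v0, v1} := by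
    ext z
    simp [Fin.exists_fin_two, eq_comm, or_comm]
  have hU2 : Module.finrank ℂ U = 2 := by
    rw [hU, ← hrange_u, finrank_span_eq_card huLI]
    simp
  have hW2 : Module.finrank ℂ W = 2 := by
    rw [hW, ← hrange_v, finrank_span_eq_card hvLI]
    simp
  have hVdim : Module.finrank ℂ V = 4 := by
    simp [V]
  have hWperp : Module.finrank ℂ Wᗮ = 2 := by
    have := Submodule.finrank_add_finrank_orthogonal (K := W)
    omega
  have hle : U ≤ Wᗮ := by
    rw [hU, Submodule.span_le]
    intro z hz
    rcases hz with hz | hz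
    · subst hz
      rw [SetLike.mem_coe, Submodule.mem_orthogonal]
      intro y hy
      rcases Submodule.mem_span_pair.mp hy with ⟨α, β, rfl⟩
      rw [inner_add_left, inner_smul_left, inner_smul_left, o00, o10]
      ring
    · simp only [Set.mem_singleton_iff] at hz
      subst hz
      rw [SetLike.mem_coe, Submodule.mem_orthogonal]
      intro y hy
      rcases Submodule.mem_span_pair.mp hy with ⟨α, β, rfl⟩
      rw [inner_add_left, inner_smul_left, inner_smul_left, o01, o11]
      ring
  have hUW : U = Wᗮ := Submodule.eq_of_le_of_finrank_le hle (by rw [hU2, hWperp])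
  have hwmem : w ∈ Wᗮ := by
    rw [Submodule.mem_orthogonal]
    intro y hy
    rcases Submodule.mem_span_pair.mp hy with ⟨α, β, rfl⟩
    rw [inner_add_left, inner_smul_left, inner_smul_left, ow0, ow1]
    ring
  rw [← hUW] at hwmem
  exact Submodule.mem_span_pair.mp hwmem

lemma mix01 (c : ι3 → ℂ) (d : ι3 → ℂ) (a : Fin 2 → ℂ) (g : V)
    (hrep : ∀ p q r : Fin 2, c ![p, q, r] = a p * g ![q, r])
    (hgperp0 : ⟪sl d 1 0, g⟫_ℂ = 0) (hgperp1 : ⟪sl d 1 1, g⟫_ℂ = 0)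
    (ho : ∀ l b : Fin 2, ⟪sl d 1 l, sl c 1 b⟫_ℂ = 0)
    (hindc : Indep (sl c 1 0) (sl c 1 1)) (hindd : Indep (sl d 1 0) (sl d 1 1)) : False := by
  obtain ⟨α, β, hw⟩ := dim4 hindc hindd (ho 0 0) (ho 0 1) (ho 1 0) (ho 1 1) hgperp0 hgperp1
  have hgy : ∀ y : ι2, g y = α * c ![y 0, 0, y 1] + β * c ![y 0, 1, y 1] := by
    intro y
    have h1 := congrFun (congrArg WithLp.ofLp hw) y
    simp only [PiLp.add_apply, PiLp.smul_apply, smul_eq_mul] at h1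
    rw [sl1c, sl1c] at h1
    linear_combination h1.symm
  have hgts : ∀ t s : Fin 2, g ![t, s] = a t * (α * g ![0, s] + β * g ![1, s]) := by
    intro t s
    have h1 := hgy ![t, s]
    simp only [Matrix.cons_val_zero, Matrix.cons_val_one, Matrix.head_cons] at h1
    rw [hrep t 0 s, hrep t 1 s] at h1
    linear_combination h1
  have hsc : ∀ u : Fin 2, sl c 1 u
      = a u • (WithLp.toLp 2 (fun y => a (y 0) * (α * g ![0, y 1] + β * g ![1, y 1])) : V) := by
    intro u
    apply WithLp.ofLp_injective; funext y
    show sl c 1 u y = a u * (a (y 0) * (α * g ![0, y 1] + β * g ![1, y 1]))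
    rw [sl1c, hrep (y 0) _ (y 1), hgts]
    ring
  exact dep_of_scaled (sl c 1 0) (sl c 1 1) _ (fun u => a u) (hsc 0) (hsc 1) hindc

lemma mix02 (c : ι3 → ℂ) (d : ι3 → ℂ) (a : Fin 2 → ℂ) (g : V)
    (hrep : ∀ p q r : Fin 2, c ![p, q, r] = a p * g ![q, r])
    (hgperp0 : ⟪sl d 2 0, g⟫_ℂ = 0) (hgperp1 : ⟪sl d 2 1, g⟫_ℂ = 0)
    (ho : ∀ l b : Fin 2, ⟪sl d 2 l, sl c 2 b⟫_ℂ = 0)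
    (hindc : Indep (sl c 2 0) (sl c 2 1)) (hindd : Indep (sl d 2 0) (sl d 2 1)) : False := by
  obtain ⟨α, β, hw⟩ := dim4 hindc hindd (ho 0 0) (ho 0 1) (ho 1 0) (ho 1 1) hgperp0 hgperp1
  have hgy : ∀ y : ι2, g y = α * c ![y 0, y 1, 0] + β * c ![y 0, y 1, 1] := by
    intro y
    have h1 := congrFun (congrArg WithLp.ofLp hw) y
    simp only [PiLp.add_apply, PiLp.smul_apply, smul_eq_mul] at h1
    rw [sl2c, sl2c] at h1
    linear_combination h1.symm
  have hgts : ∀ t s : Fin 2, g ![t, s] = a t * (α * g ![s, 0] + β * g ![s, 1]) := by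
    intro t s
    have h1 := hgy ![t, s]
    simp only [Matrix.cons_val_zero, Matrix.cons_val_one, Matrix.head_cons] at h1
    rw [hrep t s 0, hrep t s 1] at h1
    linear_combination h1
  have hsc : ∀ u : Fin 2, sl c 2 u
      = (α * g ![u, 0] + β * g ![u, 1]) • (WithLp.toLp 2 (fun y => a (y 0) * a (y 1)) : V) := by
    intro u
    apply WithLp.ofLp_injective; funext y
    show sl c 2 u y = (α * g ![u, 0] + β * g ![u, 1]) * (a (y 0) * a (y 1))
    rw [sl2c, hrep (y 0) (y 1) u, hgts]
    ring
  exact dep_of_scaled (sl c 2 0) (sl c 2 1) _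
    (fun u => α * g ![u, 0] + β * g ![u, 1]) (hsc 0) (hsc 1) hindc

lemma mix10 (c : ι3 → ℂ) (d : ι3 → ℂ) (a : Fin 2 → ℂ) (g : V)
    (hrep : ∀ p q r : Fin 2, c ![p, q, r] = a q * g ![p, r])
    (hgperp0 : ⟪sl d 0 0, g⟫_ℂ = 0) (hgperp1 : ⟪sl d 0 1, g⟫_ℂ = 0)
    (ho : ∀ l b : Fin 2, ⟪sl d 0 l, sl c 0 b⟫_ℂ = 0)
    (hindc : Indep (sl c 0 0) (sl c 0 1)) (hindd : Indep (sl d 0 0) (sl d 0 1)) : False := by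
  obtain ⟨α, β, hw⟩ := dim4 hindc hindd (ho 0 0) (ho 0 1) (ho 1 0) (ho 1 1) hgperp0 hgperp1
  have hgy : ∀ y : ι2, g y = α * c ![0, y 0, y 1] + β * c ![1, y 0, y 1] := by
    intro y
    have h1 := congrFun (congrArg WithLp.ofLp hw) y
    simp only [PiLp.add_apply, PiLp.smul_apply, smul_eq_mul] at h1
    rw [sl0c, sl0c] at h1
    linear_combination h1.symm
  have hgts : ∀ t s : Fin 2, g ![t, s] = a t * (α * g ![0, s] + β * g ![1, s]) := by
    intro t s
    have h1 := hgy ![t, s]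
    simp only [Matrix.cons_val_zero, Matrix.cons_val_one, Matrix.head_cons] at h1
    rw [hrep 0 t s, hrep 1 t s] at h1
    linear_combination h1
  have hsc : ∀ u : Fin 2, sl c 0 u
      = a u • (WithLp.toLp 2 (fun y => a (y 0) * (α * g ![0, y 1] + β * g ![1, y 1])) : V) := by
    intro u
    apply WithLp.ofLp_injective; funext y
    show sl c 0 u y = a u * (a (y 0) * (α * g ![0, y 1] + β * g ![1, y 1]))
    rw [sl0c, hrep u (y 0) (y 1), hgts]
    ring
  exact dep_of_scaled (sl c 0 0) (sl c 0 1) _ (fun u => a u) (hsc 0) (hsc 1) hindc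

lemma mix12 (c : ι3 → ℂ) (d : ι3 → ℂ) (a : Fin 2 → ℂ) (g : V)
    (hrep : ∀ p q r : Fin 2, c ![p, q, r] = a q * g ![p, r])
    (hgperp0 : ⟪sl d 2 0, g⟫_ℂ = 0) (hgperp1 : ⟪sl d 2 1, g⟫_ℂ = 0)
    (ho : ∀ l b : Fin 2, ⟪sl d 2 l, sl c 2 b⟫_ℂ = 0)
    (hindc : Indep (sl c 2 0) (sl c 2 1)) (hindd : Indep (sl d 2 0) (sl d 2 1)) : False := by
  obtain ⟨α, β, hw⟩ := dim4 hindc hindd (ho 0 0) (ho 0 1) (ho 1 0) (ho 1 1) hgperp0 hgperp1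
  have hgy : ∀ y : ι2, g y = α * c ![y 0, y 1, 0] + β * c ![y 0, y 1, 1] := by
    intro y
    have h1 := congrFun (congrArg WithLp.ofLp hw) y
    simp only [PiLp.add_apply, PiLp.smul_apply, smul_eq_mul] at h1
    rw [sl2c, sl2c] at h1
    linear_combination h1.symm
  have hgts : ∀ t s : Fin 2, g ![t, s] = a s * (α * g ![t, 0] + β * g ![t, 1]) := by
    intro t s
    have h1 := hgy ![t, s]
    simp only [Matrix.cons_val_zero, Matrix.cons_val_one, Matrix.head_cons] at h1
    rw [hrep t s 0, hrep t s 1] at h1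
    linear_combination h1
  have hsc : ∀ u : Fin 2, sl c 2 u
      = a u • (WithLp.toLp 2 (fun y => a (y 1) * (α * g ![y 0, 0] + β * g ![y 0, 1])) : V) := by
    intro u
    apply WithLp.ofLp_injective; funext y
    show sl c 2 u y = a u * (a (y 1) * (α * g ![y 0, 0] + β * g ![y 0, 1]))
    rw [sl2c, hrep (y 0) (y 1) u, hgts]
    ring
  exact dep_of_scaled (sl c 2 0) (sl c 2 1) _ (fun u => a u) (hsc 0) (hsc 1) hindc

lemma mix20 (c : ι3 → ℂ) (d : ι3 → ℂ) (a : Fin 2 → ℂ) (g : V)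
    (hrep : ∀ p q r : Fin 2, c ![p, q, r] = a r * g ![p, q])
    (hgperp0 : ⟪sl d 0 0, g⟫_ℂ = 0) (hgperp1 : ⟪sl d 0 1, g⟫_ℂ = 0)
    (ho : ∀ l b : Fin 2, ⟪sl d 0 l, sl c 0 b⟫_ℂ = 0)
    (hindc : Indep (sl c 0 0) (sl c 0 1)) (hindd : Indep (sl d 0 0) (sl d 0 1)) : False := by
  obtain ⟨α, β, hw⟩ := dim4 hindc hindd (ho 0 0) (ho 0 1) (ho 1 0) (ho 1 1) hgperp0 hgperp1
  have hgy : ∀ y : ι2, g y = α * c ![0, y 0, y 1] + β * c ![1, y 0, y 1] := by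
    intro y
    have h1 := congrFun (congrArg WithLp.ofLp hw) y
    simp only [PiLp.add_apply, PiLp.smul_apply, smul_eq_mul] at h1
    rw [sl0c, sl0c] at h1
    linear_combination h1.symm
  have hgts : ∀ t s : Fin 2, g ![t, s] = a s * (α * g ![0, t] + β * g ![1, t]) := by
    intro t s
    have h1 := hgy ![t, s]
    simp only [Matrix.cons_val_zero, Matrix.cons_val_one, Matrix.head_cons] at h1
    rw [hrep 0 t s, hrep 1 t s] at h1
    linear_combination h1
  have hsc : ∀ u : Fin 2, sl c 0 u
      = (α * g ![0, u] + β * g ![1, u]) • (WithLp.toLp 2 (fun y => a (y 1) * a (y 0)) : V) := by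
    intro u
    apply WithLp.ofLp_injective; funext y
    show sl c 0 u y = (α * g ![0, u] + β * g ![1, u]) * (a (y 1) * a (y 0))
    rw [sl0c, hrep u (y 0) (y 1), hgts]
    ring
  exact dep_of_scaled (sl c 0 0) (sl c 0 1) _
    (fun u => α * g ![0, u] + β * g ![1, u]) (hsc 0) (hsc 1) hindc

lemma mix21 (c : ι3 → ℂ) (d : ι3 → ℂ) (a : Fin 2 → ℂ) (g : V)
    (hrep : ∀ p q r : Fin 2, c ![p, q, r] = a r * g ![p, q])
    (hgperp0 : ⟪sl d 1 0, g⟫_ℂ = 0) (hgperp1 : ⟪sl d 1 1, g⟫_ℂ = 0)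
    (ho : ∀ l b : Fin 2, ⟪sl d 1 l, sl c 1 b⟫_ℂ = 0)
    (hindc : Indep (sl c 1 0) (sl c 1 1)) (hindd : Indep (sl d 1 0) (sl d 1 1)) : False := by
  obtain ⟨α, β, hw⟩ := dim4 hindc hindd (ho 0 0) (ho 0 1) (ho 1 0) (ho 1 1) hgperp0 hgperp1
  have hgy : ∀ y : ι2, g y = α * c ![y 0, 0, y 1] + β * c ![y 0, 1, y 1] := by
    intro y
    have h1 := congrFun (congrArg WithLp.ofLp hw) y
    simp only [PiLp.add_apply, PiLp.smul_apply, smul_eq_mul] at h1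
    rw [sl1c, sl1c] at h1
    linear_combination h1.symm
  have hgts : ∀ t s : Fin 2, g ![t, s] = a s * (α * g ![t, 0] + β * g ![t, 1]) := by
    intro t s
    have h1 := hgy ![t, s]
    simp only [Matrix.cons_val_zero, Matrix.cons_val_one, Matrix.head_cons] at h1
    rw [hrep t 0 s, hrep t 1 s] at h1
    linear_combination h1
  have hsc : ∀ u : Fin 2, sl c 1 u
      = a u • (WithLp.toLp 2 (fun y => a (y 1) * (α * g ![y 0, 0] + β * g ![y 0, 1])) : V) := by
    intro u
    apply WithLp.ofLp_injective; funext y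
    show sl c 1 u y = a u * (a (y 1) * (α * g ![y 0, 0] + β * g ![y 0, 1]))
    rw [sl1c, hrep (y 0) u (y 1), hgts]
    ring
  exact dep_of_scaled (sl c 1 0) (sl c 1 1) _ (fun u => a u) (hsc 0) (hsc 1) hindc

def e2 : ι2 ≃ Fin 2 × Fin 2 where
  toFun y := (y 0, y 1)
  invFun p := ![p.1, p.2]
  left_inv y := eta2 y
  right_inv p := by simp

lemma sum_i2 (F : ι2 → ℂ) :
    (∑ y, F y) = F ![0,0] + F ![0,1] + F ![1,0] + F ![1,1] := by
  have h := Fintype.sum_equiv e2 F (fun p => F ![p.1, p.2]) (by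
    intro y
    show F y = F ![(e2 y).1, (e2 y).2]
    rw [show (![(e2 y).1, (e2 y).2] : ι2) = y from eta2 y])
  rw [h, Fintype.sum_prod_type, Fin.sum_univ_two, Fin.sum_univ_two, Fin.sum_univ_two]
  ring

lemma inner_V (x y : V) : ⟪x, y⟫_ℂ = ∑ yy, conj (x yy) * y yy := by
  simp [PiLp.inner_apply, RCLike.inner_apply, mul_comm]

lemma inner_smul_pair (x y : V) (α β : ℂ) :
    ⟪α • x, β • y⟫_ℂ = conj α * β * ⟪x, y⟫_ℂ := by
  rw [inner_smul_left, inner_smul_right]; ring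

lemma pair_zero {z w : ℂ} (h : z * conj z + w * conj w = 0) : z = 0 ∧ w = 0 := by
  have h2 : (Complex.normSq z : ℂ) + (Complex.normSq w : ℂ) = 0 := by
    rw [← Complex.mul_conj, ← Complex.mul_conj]; exact h
  have h3 : Complex.normSq z + Complex.normSq w = 0 := by exact_mod_cast h2
  constructor
  · refine Complex.normSq_eq_zero.mp ?_
    nlinarith [Complex.normSq_nonneg z, Complex.normSq_nonneg w]
  · refine Complex.normSq_eq_zero.mp ?_
    nlinarith [Complex.normSq_nonneg z, Complex.normSq_nonneg w]

lemma branchZero (u v : Fin 2 → ℂ) (vc vd : V)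
    (hkey : ∀ b b' : Fin 2, conj (u b) * u b' * ⟪vc, vc⟫_ℂ = conj (v b) * v b' * ⟪vd, vd⟫_ℂ)
    (hP : conj (u 0) * v 0 + conj (u 1) * v 1 = 0) :
    (v 0 = 0 ∧ v 1 = 0) ∨ vd = 0 := by
  have e2' : conj (v 0) * u 0 + conj (v 1) * u 1 = 0 := by
    have h := congrArg (starRingEnd ℂ) hP
    simp only [map_add, _root_.map_mul, Complex.conj_conj, map_zero] at h
    linear_combination h
  have hL : (v 0 * conj (u 0) + v 1 * conj (u 1)) * (conj (v 0) * u 0 + conj (v 1) * u 1)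
        * ⟪vc, vc⟫_ℂ
      = (v 0 * conj (v 0) + v 1 * conj (v 1)) * (conj (v 0) * v 0 + conj (v 1) * v 1)
        * ⟪vd, vd⟫_ℂ := by
    linear_combination (v 0 * conj (v 0)) * hkey 0 0 + (v 0 * conj (v 1)) * hkey 0 1
      + (v 1 * conj (v 0)) * hkey 1 0 + (v 1 * conj (v 1)) * hkey 1 1
  rw [e2'] at hL
  simp only [mul_zero, zero_mul] at hL
  rcases mul_eq_zero.mp hL.symm with h | h
  · rcases mul_eq_zero.mp h with h' | h'
    · exact Or.inl (pair_zero h')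
    · left
      have h'' : conj (v 0) * v 0 + conj (v 1) * v 1 = 0 := h'
      have : v 0 * conj (v 0) + v 1 * conj (v 1) = 0 := by linear_combination h''
      exact pair_zero this
  · right
    exact inner_self_eq_zero.mp h

lemma repc0 (c : ι3 → ℂ) (a : Fin 2 → ℂ) (g : V) (h : ∀ b, sl c 0 b = a b • g) :
    ∀ p q r : Fin 2, c ![p, q, r] = a p * g ![q, r] := by
  intro p q r
  calc c ![p, q, r] = sl c 0 p ![q, r] := by rw [sl0c]; simp
    _ = (a p • g) ![q, r] := congrFun (congrArg WithLp.ofLp (h p)) _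
    _ = a p * g ![q, r] := rfl

lemma repc1 (c : ι3 → ℂ) (a : Fin 2 → ℂ) (g : V) (h : ∀ b, sl c 1 b = a b • g) :
    ∀ p q r : Fin 2, c ![p, q, r] = a q * g ![p, r] := by
  intro p q r
  calc c ![p, q, r] = sl c 1 q ![p, r] := by rw [sl1c]; simp
    _ = (a q • g) ![p, r] := congrFun (congrArg WithLp.ofLp (h q)) _
    _ = a q * g ![p, r] := rfl

lemma repc2 (c : ι3 → ℂ) (a : Fin 2 → ℂ) (g : V) (h : ∀ b, sl c 2 b = a b • g) :
    ∀ p q r : Fin 2, c ![p, q, r] = a r * g ![p, q] := by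
  intro p q r
  calc c ![p, q, r] = sl c 2 r ![p, q] := by rw [sl2c]; simp
    _ = (a r • g) ![p, q] := congrFun (congrArg WithLp.ofLp (h r)) _
    _ = a r * g ![p, q] := rfl

lemma eta3 (s : ι3) : ![s 0, s 1, s 2] = s := by
  funext k; fin_cases k <;> rfl

/-- Case A: some cut of `c` is degenerate. -/
lemma caseA (c d : ι3 → ℂ)
    (hF1 : ∀ i j b bq, ⟪sl c i b, sl d j bq⟫_ℂ = 0)
    (hF1' : ∀ i j b bq, ⟪sl d i b, sl c j bq⟫_ℂ = 0)
    (hF2 : ∀ i j b bq, ⟪sl c i b, sl c j bq⟫_ℂ = ⟪sl d i b, sl d j bq⟫_ℂ)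
    (hnd : (∑ s, conj (d s) * d s) = 1)
    (i₀ : Fin 3) (hdep : ¬ Indep (sl c i₀ 0) (sl c i₀ 1)) : False := by
  classical
  -- step 1 : all cuts of c are degenerate
  have hdepAll : ∀ j : Fin 3, ¬ Indep (sl c j 0) (sl c j 1) := by
    intro j hind
    have hindd : Indep (sl d j 0) (sl d j 1) :=
      indep_transfer (hF2 j j 0 0) (hF2 j j 0 1) (hF2 j j 1 0) (hF2 j j 1 1) hind
    have hij : i₀ ≠ j := fun h => hdep (h ▸ hind)
    obtain ⟨a, g, b₀, hb₀, hx0, hx1⟩ := rep_of_dep hdep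
    have hrepsl : ∀ b, sl c i₀ b = a b • g := by
      intro b; fin_cases b
      · exact hx0
      · exact hx1
    have hg_eq : sl c i₀ b₀ = g := by rw [hrepsl b₀, hb₀, one_smul]
    have hperp : ∀ l : Fin 2, ⟪sl d j l, g⟫_ℂ = 0 := by
      intro l; rw [← hg_eq]; exact hF1' j i₀ l b₀
    fin_cases i₀ <;> fin_cases j
    · exact hij rfl
    · exact mix01 c d a g (repc0 c a g hrepsl) (hperp 0) (hperp 1)
        (fun l b => hF1' 1 1 l b) hind hindd
    · exact mix02 c d a g (repc0 c a g hrepsl) (hperp 0) (hperp 1)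
        (fun l b => hF1' 2 2 l b) hind hindd
    · exact mix10 c d a g (repc1 c a g hrepsl) (hperp 0) (hperp 1)
        (fun l b => hF1' 0 0 l b) hind hindd
    · exact hij rfl
    · exact mix12 c d a g (repc1 c a g hrepsl) (hperp 0) (hperp 1)
        (fun l b => hF1' 2 2 l b) hind hindd
    · exact mix20 c d a g (repc2 c a g hrepsl) (hperp 0) (hperp 1)
        (fun l b => hF1' 0 0 l b) hind hindd
    · exact mix21 c d a g (repc2 c a g hrepsl) (hperp 0) (hperp 1)
        (fun l b => hF1' 1 1 l b) hind hindd
    · exact hij rfl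
  have hdepAlld : ∀ j : Fin 3, ¬ Indep (sl d j 0) (sl d j 1) := by
    intro j hind
    exact hdepAll j (indep_transfer (hF2 j j 0 0).symm (hF2 j j 0 1).symm
      (hF2 j j 1 0).symm (hF2 j j 1 1).symm hind)
  -- step 2 : product representations
  obtain ⟨a, g, b₀, hb₀, hcx0, hcx1⟩ := rep_of_dep (hdepAll 0)
  have hslc0 : ∀ b, sl c 0 b = a b • g := by
    intro b; fin_cases b
    · exact hcx0
    · exact hcx1
  have hrepc : ∀ p q r : Fin 2, c ![p, q, r] = a p * g ![q, r] := repc0 c a g hslc0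
  obtain ⟨a', g', b₁, hb₁, hcy0, hcy1⟩ := rep_of_dep (hdepAll 1)
  have hslc1 : ∀ b, sl c 1 b = a' b • g' := by
    intro b; fin_cases b
    · exact hcy0
    · exact hcy1
  have hrepc1 : ∀ p q r : Fin 2, c ![p, q, r] = a' q * g' ![p, r] := repc1 c a' g' hslc1
  set m : Fin 2 → ℂ := fun r => g' ![b₀, r] with hm
  have hgfact : ∀ q r : Fin 2, g ![q, r] = a' q * m r := by
    intro q r
    have h1 := hrepc b₀ q r
    have h2 := hrepc1 b₀ q r
    rw [hb₀, one_mul] at h1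
    rw [← h1, h2, hm]
  have hfc : ∀ p q r : Fin 2, c ![p, q, r] = a p * a' q * m r := by
    intro p q r
    rw [hrepc, hgfact]; ring
  obtain ⟨A, G, B₀, hB₀, hdx0, hdx1⟩ := rep_of_dep (hdepAlld 0)
  have hsld0 : ∀ b, sl d 0 b = A b • G := by
    intro b; fin_cases b
    · exact hdx0
    · exact hdx1
  have hrepd : ∀ p q r : Fin 2, d ![p, q, r] = A p * G ![q, r] := repc0 d A G hsld0
  obtain ⟨A', G', B₁, hB₁, hdy0, hdy1⟩ := rep_of_dep (hdepAlld 1)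
  have hsld1 : ∀ b, sl d 1 b = A' b • G' := by
    intro b; fin_cases b
    · exact hdy0
    · exact hdy1
  have hrepd1 : ∀ p q r : Fin 2, d ![p, q, r] = A' q * G' ![p, r] := repc1 d A' G' hsld1
  set M : Fin 2 → ℂ := fun r => G' ![B₀, r] with hM
  have hGfact : ∀ q r : Fin 2, G ![q, r] = A' q * M r := by
    intro q r
    have h1 := hrepd B₀ q r
    have h2 := hrepd1 B₀ q r
    rw [hB₀, one_mul] at h1
    rw [← h1, h2, hM]
  have hfd : ∀ p q r : Fin 2, d ![p, q, r] = A p * A' q * M r := by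
    intro p q r
    rw [hrepd, hGfact]; ring
  -- the product slice vectors
  set vc0 : V := WithLp.toLp 2 (fun y => a' (y 0) * m (y 1)) with hvc0
  set vd0 : V := WithLp.toLp 2 (fun y => A' (y 0) * M (y 1)) with hvd0
  set vc1 : V := WithLp.toLp 2 (fun y => a (y 0) * m (y 1)) with hvc1
  set vd1 : V := WithLp.toLp 2 (fun y => A (y 0) * M (y 1)) with hvd1
  set vc2 : V := WithLp.toLp 2 (fun y => a (y 0) * a' (y 1)) with hvc2
  set vd2 : V := WithLp.toLp 2 (fun y => A (y 0) * A' (y 1)) with hvd2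
  have hslc0' : ∀ b, sl c 0 b = a b • vc0 := by
    intro b; apply WithLp.ofLp_injective; funext y
    show sl c 0 b y = a b * (a' (y 0) * m (y 1))
    rw [sl0c, hfc]; ring
  have hsld0' : ∀ b, sl d 0 b = A b • vd0 := by
    intro b; apply WithLp.ofLp_injective; funext y
    show sl d 0 b y = A b * (A' (y 0) * M (y 1))
    rw [sl0c, hfd]; ring
  have hslc1' : ∀ b, sl c 1 b = a' b • vc1 := by
    intro b; apply WithLp.ofLp_injective; funext y
    show sl c 1 b y = a' b * (a (y 0) * m (y 1))
    rw [sl1c, hfc]; ring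
  have hsld1' : ∀ b, sl d 1 b = A' b • vd1 := by
    intro b; apply WithLp.ofLp_injective; funext y
    show sl d 1 b y = A' b * (A (y 0) * M (y 1))
    rw [sl1c, hfd]; ring
  have hslc2' : ∀ b, sl c 2 b = m b • vc2 := by
    intro b; apply WithLp.ofLp_injective; funext y
    show sl c 2 b y = m b * (a (y 0) * a' (y 1))
    rw [sl2c, hfc]; ring
  have hsld2' : ∀ b, sl d 2 b = M b • vd2 := by
    intro b; apply WithLp.ofLp_injective; funext y
    show sl d 2 b y = M b * (A (y 0) * A' (y 1))
    rw [sl2c, hfd]; ring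
  -- d is nonzero somewhere
  have hdnz : ¬ (∀ s : ι3, d s = 0) := by
    intro hz
    rw [show (∑ s, conj (d s) * d s) = 0 from by
      refine Finset.sum_eq_zero fun s _ => ?_
      rw [hz s]; ring] at hnd
    exact zero_ne_one hnd
  have hdzero_of : (∀ p, A p = 0) ∨ (∀ p, A' p = 0) ∨ (∀ p, M p = 0) → False := by
    intro hcase
    apply hdnz
    intro s
    rw [← eta3 s, hfd]
    rcases hcase with h | h | h
    · rw [h]; ring
    · rw [h]; ring
    · rw [h]; ring
  -- the three-factor orthogonality
  have hP123 : (conj (a 0) * A 0 + conj (a 1) * A 1) * ⟪vc0, vd0⟫_ℂ = 0 := by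
    have h0 : conj (a 0) * A 0 * ⟪vc0, vd0⟫_ℂ = 0 := by
      rw [← inner_smul_pair, ← hslc0' 0, ← hsld0' 0]; exact hF1 0 0 0 0
    have h1 : conj (a 1) * A 1 * ⟪vc0, vd0⟫_ℂ = 0 := by
      rw [← inner_smul_pair, ← hslc0' 1, ← hsld0' 1]; exact hF1 0 0 1 1
    linear_combination h0 + h1
  have hinner_split : ⟪vc0, vd0⟫_ℂ
      = (conj (a' 0) * A' 0 + conj (a' 1) * A' 1) * (conj (m 0) * M 0 + conj (m 1) * M 1) := by
    rw [inner_V, sum_i2]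
    simp only [hvc0, hvd0]
    simp only [Matrix.cons_val_zero, Matrix.cons_val_one, Matrix.head_cons, _root_.map_mul]
    ring
  -- keys for the three cuts
  have hkey0 : ∀ b b' : Fin 2, conj (a b) * a b' * ⟪vc0, vc0⟫_ℂ
      = conj (A b) * A b' * ⟪vd0, vd0⟫_ℂ := by
    intro b b'
    rw [← inner_smul_pair, ← inner_smul_pair, ← hslc0' b, ← hslc0' b', ← hsld0' b, ← hsld0' b']
    exact hF2 0 0 b b'
  have hkey1 : ∀ b b' : Fin 2, conj (a' b) * a' b' * ⟪vc1, vc1⟫_ℂ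
      = conj (A' b) * A' b' * ⟪vd1, vd1⟫_ℂ := by
    intro b b'
    rw [← inner_smul_pair, ← inner_smul_pair, ← hslc1' b, ← hslc1' b', ← hsld1' b, ← hsld1' b']
    exact hF2 1 1 b b'
  have hkey2 : ∀ b b' : Fin 2, conj (m b) * m b' * ⟪vc2, vc2⟫_ℂ
      = conj (M b) * M b' * ⟪vd2, vd2⟫_ℂ := by
    intro b b'
    rw [← inner_smul_pair, ← inner_smul_pair, ← hslc2' b, ← hslc2' b', ← hsld2' b, ← hsld2' b']
    exact hF2 2 2 b b'
  -- dispatch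
  rcases mul_eq_zero.mp hP123 with hP | hrest
  · rcases branchZero a A vc0 vd0 hkey0 hP with hv | hv
    · exact hdzero_of (Or.inl (fun p => by fin_cases p; exacts [hv.1, hv.2]))
    · apply hdzero_of
      left
      intro p
      exfalso
      apply hdnz
      intro s
      rw [← eta3 s, hfd]
      have : A' (s 1) * M (s 2) = vd0 ![s 1, s 2] := by simp [hvd0]
      rw [show A (s 0) * A' (s 1) * M (s 2) = A (s 0) * (A' (s 1) * M (s 2)) by ring, this, hv]
      simp
  · rw [hinner_split] at hrest
    rcases mul_eq_zero.mp hrest with hP | hP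
    · rcases branchZero a' A' vc1 vd1 hkey1 hP with hv | hv
      · exact hdzero_of (Or.inr (Or.inl (fun p => by fin_cases p; exacts [hv.1, hv.2])))
      · apply hdnz
        intro s
        rw [← eta3 s, hfd]
        have : A (s 0) * M (s 2) = vd1 ![s 0, s 2] := by simp [hvd1]
        rw [show A (s 0) * A' (s 1) * M (s 2) = A' (s 1) * (A (s 0) * M (s 2)) by ring, this, hv]
        simp
    · rcases branchZero m M vc2 vd2 hkey2 hP with hv | hv
      · exact hdzero_of (Or.inr (Or.inr (fun p => by fin_cases p; exacts [hv.1, hv.2])))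
      · apply hdnz
        intro s
        rw [← eta3 s, hfd]
        have : A (s 0) * A' (s 1) = vd2 ![s 0, s 1] := by simp [hvd2]
        rw [show A (s 0) * A' (s 1) * M (s 2) = M (s 2) * (A (s 0) * A' (s 1)) by ring, this, hv]
        simp

/-- Case B core: all cuts nondegenerate forces slices of `c` to be symmetric matrices. -/
lemma symmB (c d : ι3 → ℂ)
    (hIc0 : Indep (sl c 0 0) (sl c 0 1)) (hIc1 : Indep (sl c 1 0) (sl c 1 1))
    (hIc2 : Indep (sl c 2 0) (sl c 2 1))
    (hId : Indep (sl d 0 0) (sl d 0 1))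
    (hO : ∀ (l : Fin 2) (j : Fin 3) (b : Fin 2), ⟪sl d 0 l, sl c j b⟫_ℂ = 0) :
    ∀ b t s : Fin 2, c ![b, t, s] = c ![b, s, t] := by
  classical
  -- coefficient matrices
  obtain ⟨α0, β0, hY0⟩ := dim4 hIc0 hId (hO 0 0 0) (hO 0 0 1) (hO 1 0 0) (hO 1 0 1)
    (hO 0 1 0) (hO 1 1 0)
  obtain ⟨α1, β1, hY1⟩ := dim4 hIc0 hId (hO 0 0 0) (hO 0 0 1) (hO 1 0 0) (hO 1 0 1)
    (hO 0 1 1) (hO 1 1 1)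
  set M : Matrix (Fin 2) (Fin 2) ℂ := Matrix.of ![![α0, β0], ![α1, β1]] with hMdef
  have hMrep : ∀ u, M u 0 • sl c 0 0 + M u 1 • sl c 0 1 = sl c 1 u := by
    intro u
    rcases fin2 u with rfl | rfl
    · simpa [hMdef] using hY0
    · simpa [hMdef] using hY1
  obtain ⟨γ0, δ0, hX0⟩ := dim4 hIc1 hId (hO 0 1 0) (hO 0 1 1) (hO 1 1 0) (hO 1 1 1)
    (hO 0 0 0) (hO 1 0 0)
  obtain ⟨γ1, δ1, hX1⟩ := dim4 hIc1 hId (hO 0 1 0) (hO 0 1 1) (hO 1 1 0) (hO 1 1 1)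
    (hO 0 0 1) (hO 1 0 1)
  set M' : Matrix (Fin 2) (Fin 2) ℂ := Matrix.of ![![γ0, δ0], ![γ1, δ1]] with hM'def
  have hM'rep : ∀ b, M' b 0 • sl c 1 0 + M' b 1 • sl c 1 1 = sl c 0 b := by
    intro b
    rcases fin2 b with rfl | rfl
    · simpa [hM'def] using hX0
    · simpa [hM'def] using hX1
  obtain ⟨ka0, la0, hZ0⟩ := dim4 hIc2 hId (hO 0 2 0) (hO 0 2 1) (hO 1 2 0) (hO 1 2 1)
    (hO 0 1 0) (hO 1 1 0)
  obtain ⟨ka1, la1, hZ1⟩ := dim4 hIc2 hId (hO 0 2 0) (hO 0 2 1) (hO 1 2 0) (hO 1 2 1)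
    (hO 0 1 1) (hO 1 1 1)
  set K' : Matrix (Fin 2) (Fin 2) ℂ := Matrix.of ![![ka0, la0], ![ka1, la1]] with hK'def
  have hK'rep : ∀ u, K' u 0 • sl c 2 0 + K' u 1 • sl c 2 1 = sl c 1 u := by
    intro u
    rcases fin2 u with rfl | rfl
    · simpa [hK'def] using hZ0
    · simpa [hK'def] using hZ1
  -- coordinate forms
  have hMc : ∀ x u z : Fin 2, c ![x, u, z] = M u 0 * c ![0, x, z] + M u 1 * c ![1, x, z] := by
    intro x u z
    have h1 := congrFun (congrArg WithLp.ofLp (hMrep u)) ![x, z]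
    simp only [PiLp.add_apply, PiLp.smul_apply, smul_eq_mul] at h1
    rw [sl0c, sl0c, sl1c] at h1
    simp only [Matrix.cons_val_zero, Matrix.cons_val_one, Matrix.head_cons] at h1
    linear_combination h1.symm
  have hM'c : ∀ b x z : Fin 2, c ![b, x, z] = M' b 0 * c ![x, 0, z] + M' b 1 * c ![x, 1, z] := by
    intro b x z
    have h1 := congrFun (congrArg WithLp.ofLp (hM'rep b)) ![x, z]
    simp only [PiLp.add_apply, PiLp.smul_apply, smul_eq_mul] at h1
    rw [sl1c, sl1c, sl0c] at h1
    simp only [Matrix.cons_val_zero, Matrix.cons_val_one, Matrix.head_cons] at h1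
    linear_combination h1.symm
  have hK'c : ∀ x u z : Fin 2, c ![x, u, z] = K' u 0 * c ![x, z, 0] + K' u 1 * c ![x, z, 1] := by
    intro x u z
    have h1 := congrFun (congrArg WithLp.ofLp (hK'rep u)) ![x, z]
    simp only [PiLp.add_apply, PiLp.smul_apply, smul_eq_mul] at h1
    rw [sl2c, sl2c, sl1c] at h1
    simp only [Matrix.cons_val_zero, Matrix.cons_val_one, Matrix.head_cons] at h1
    linear_combination h1.symm
  -- M * M' = 1
  have hcomb : ∀ u y0 y1 : Fin 2, c ![y0, u, y1]
      = (M u 0 * M' 0 0 + M u 1 * M' 1 0) * c ![y0, 0, y1]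
        + (M u 0 * M' 0 1 + M u 1 * M' 1 1) * c ![y0, 1, y1] := by
    intro u y0 y1
    linear_combination (hMc y0 u y1) + M u 0 * (hM'c 0 y0 y1) + M u 1 * (hM'c 1 y0 y1)
  have hcombV : ∀ u, ((M * M') u 0) • sl c 1 0 + ((M * M') u 1) • sl c 1 1 = sl c 1 u := by
    intro u
    apply WithLp.ofLp_injective; funext y
    show (M * M') u 0 * sl c 1 0 y + (M * M') u 1 * sl c 1 1 y = sl c 1 u y
    rw [sl1c, sl1c, sl1c]
    simp only [Matrix.mul_apply, Fin.sum_univ_two]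
    linear_combination (hcomb u (y 0) (y 1)).symm
  have hMM' : M * M' = 1 := by
    ext u v
    have h1 : ((M * M') u 0 - (1 : Matrix (Fin 2) (Fin 2) ℂ) u 0) • sl c 1 0
        + ((M * M') u 1 - (1 : Matrix (Fin 2) (Fin 2) ℂ) u 1) • sl c 1 1 = 0 := by
      rcases fin2 u with rfl | rfl
      · rw [sub_smul, sub_smul]
        rw [show ((1 : Matrix (Fin 2) (Fin 2) ℂ) 0 0) = 1 by simp [Matrix.one_apply],
          show ((1 : Matrix (Fin 2) (Fin 2) ℂ) 0 1) = 0 by simp [Matrix.one_apply]]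
        rw [one_smul, zero_smul, sub_zero]
        rw [show ((M * M') 0 0) • sl c 1 0 - sl c 1 0 + (M * M') 0 1 • sl c 1 1
          = ((M * M') 0 0) • sl c 1 0 + ((M * M') 0 1) • sl c 1 1 - sl c 1 0 by abel]
        rw [hcombV 0]; abel
      · rw [sub_smul, sub_smul]
        rw [show ((1 : Matrix (Fin 2) (Fin 2) ℂ) 1 0) = 0 by simp [Matrix.one_apply],
          show ((1 : Matrix (Fin 2) (Fin 2) ℂ) 1 1) = 1 by simp [Matrix.one_apply]]
        rw [one_smul, zero_smul, sub_zero]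
        rw [show ((M * M') 1 0) • sl c 1 0 + ((M * M') 1 1 • sl c 1 1 - sl c 1 1)
          = ((M * M') 1 0) • sl c 1 0 + ((M * M') 1 1) • sl c 1 1 - sl c 1 1 by abel]
        rw [hcombV 1]; abel
    have h2 := hIc1 _ _ h1
    rcases fin2 v with rfl | rfl
    · exact sub_eq_zero.mp h2.1
    · exact sub_eq_zero.mp h2.2
  have hM'M : M' * M = 1 := mul_eq_one_comm.mp hMM'
  have hq : ∀ v b : Fin 2, (M' * M) v b = (1 : Matrix (Fin 2) (Fin 2) ℂ) v b := by
    intro v b; rw [hM'M]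
  have q00 : M' 0 0 * M 0 0 + M' 0 1 * M 1 0 = 1 := by
    have := hq 0 0; rw [Matrix.mul_apply, Fin.sum_univ_two] at this
    simpa [Matrix.one_apply] using this
  have q01 : M' 0 0 * M 0 1 + M' 0 1 * M 1 1 = 0 := by
    have := hq 0 1; rw [Matrix.mul_apply, Fin.sum_univ_two] at this
    simpa [Matrix.one_apply] using this
  have q10 : M' 1 0 * M 0 0 + M' 1 1 * M 1 0 = 0 := by
    have := hq 1 0; rw [Matrix.mul_apply, Fin.sum_univ_two] at this
    simpa [Matrix.one_apply] using this
  have q11 : M' 1 0 * M 0 1 + M' 1 1 * M 1 1 = 1 := by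
    have := hq 1 1; rw [Matrix.mul_apply, Fin.sum_univ_two] at this
    simpa [Matrix.one_apply] using this
  have hTYc : ∀ u x z : Fin 2, c ![z, u, x] = M x 0 * c ![0, u, z] + M x 1 * c ![1, u, z] := by
    intro u x z
    linear_combination (hK'c z u x) + K' u 0 * (hMc z x 0) + K' u 1 * (hMc z x 1)
      - M x 0 * (hK'c 0 u z) - M x 1 * (hK'c 1 u z)
  have hMWc : ∀ u x z : Fin 2, c ![x, u, z]
      = M x 0 * (M u 0 * c ![0, 0, z] + M u 1 * c ![0, 1, z])
        + M x 1 * (M u 0 * c ![1, 0, z] + M u 1 * c ![1, 1, z]) := by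
    intro u x z
    linear_combination (hMc x u z) + M u 0 * (hMc 0 x z) + M u 1 * (hMc 1 x z)
  have hdag : ∀ v y0 y1 : Fin 2,
      c ![y1, v, y0] = M' v 0 * c ![y0, 0, y1] + M' v 1 * c ![y0, 1, y1] := by
    intro v y0 y1
    rcases fin2 v with rfl | rfl
    · linear_combination (hTYc 0 y0 y1) - M' 0 0 * (hMWc 0 y0 y1) - M' 0 1 * (hMWc 1 y0 y1)
        - (M y0 0 * c ![0, 0, y1] + M y0 1 * c ![1, 0, y1]) * q00
        - (M y0 0 * c ![0, 1, y1] + M y0 1 * c ![1, 1, y1]) * q01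
    · linear_combination (hTYc 1 y0 y1) - M' 1 0 * (hMWc 0 y0 y1) - M' 1 1 * (hMWc 1 y0 y1)
        - (M y0 0 * c ![0, 0, y1] + M y0 1 * c ![1, 0, y1]) * q10
        - (M y0 0 * c ![0, 1, y1] + M y0 1 * c ![1, 1, y1]) * q11
  have hTY2c : ∀ v y0 y1 : Fin 2,
      c ![y0, v, y1] = M y0 0 * c ![y1, v, 0] + M y0 1 * c ![y1, v, 1] := by
    intro v y0 y1
    linear_combination (hdag v y1 y0) - M y0 0 * (hdag v 0 y1) - M y0 1 * (hdag v 1 y1)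
      + M' v 0 * (hTYc 0 y0 y1) + M' v 1 * (hTYc 1 y0 y1)
  have hAv : ∀ v y0 y1 : Fin 2, c ![y1, v, y0] - c ![y0, v, y1]
      = M y0 0 * (c ![0, v, y1] - c ![y1, v, 0]) + M y0 1 * (c ![1, v, y1] - c ![y1, v, 1]) := by
    intro v y0 y1
    linear_combination (hTYc v y0 y1) - (hTY2c v y0 y1)
  by_cases hη : (c ![0,0,1] - c ![1,0,0] = 0) ∧ (c ![0,1,1] - c ![1,1,0] = 0)
  · have hYsym : ∀ v t s : Fin 2, c ![t, v, s] = c ![s, v, t] := by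
      intro v t s
      rcases fin2 t with rfl | rfl <;> rcases fin2 s with rfl | rfl
      · rfl
      · rcases fin2 v with rfl | rfl
        · linear_combination hη.1
        · linear_combination hη.2
      · rcases fin2 v with rfl | rfl
        · linear_combination -hη.1
        · linear_combination -hη.2
      · rfl
    intro b t s
    rw [hM'c b t s, hM'c b s t, hYsym 0 t s, hYsym 1 t s]
  · have hex : ∃ v : Fin 2, c ![0, v, 1] - c ![1, v, 0] ≠ 0 := by
      by_contra hh
      push_neg at hh
      exact hη ⟨hh 0, hh 1⟩
    obtain ⟨v, hv⟩ := hex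
    have hM00 : M 0 0 = -1 := by
      have h := hAv v 0 1
      have h2 : (M 0 0 + 1) * (c ![0, v, 1] - c ![1, v, 0]) = 0 := by
        linear_combination -h
      rcases mul_eq_zero.mp h2 with h3 | h3
      · linear_combination h3
      · exact absurd h3 hv
    have hM10 : M 1 0 = 0 := by
      have h := hAv v 1 1
      have h2 : M 1 0 * (c ![0, v, 1] - c ![1, v, 0]) = 0 := by
        linear_combination -h
      rcases mul_eq_zero.mp h2 with h3 | h3
      · exact h3
      · exact absurd h3 hv
    have hM01 : M 0 1 = 0 := by
      have h := hAv v 0 0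
      have h2 : M 0 1 * (c ![0, v, 1] - c ![1, v, 0]) = 0 := by
        linear_combination h
      rcases mul_eq_zero.mp h2 with h3 | h3
      · exact h3
      · exact absurd h3 hv
    have hM11 : M 1 1 = -1 := by
      have h := hAv v 1 0
      have h2 : (M 1 1 + 1) * (c ![0, v, 1] - c ![1, v, 0]) = 0 := by
        linear_combination h
      rcases mul_eq_zero.mp h2 with h3 | h3
      · linear_combination h3
      · exact absurd h3 hv
    have hanti : ∀ u t s : Fin 2, c ![s, u, t] = -c ![t, u, s] := by
      intro u t s
      have h := hTYc u t s
      rcases fin2 t with rfl | rfl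
      · rw [hM00, hM01] at h; linear_combination h
      · rw [hM10, hM11] at h; linear_combination h
    have hdiag : ∀ u t : Fin 2, c ![t, u, t] = 0 := by
      intro u t
      have h := hanti u t t
      have h2 : (2:ℂ) * c ![t, u, t] = 0 := by linear_combination h
      have := mul_eq_zero.mp h2
      rcases this with h3 | h3
      · norm_num at h3
      · exact h3
    have hcombo : (c ![0,1,1]) • sl c 1 0 + (-(c ![0,0,1])) • sl c 1 1 = 0 := by
      apply WithLp.ofLp_injective; funext y
      show c ![0,1,1] * sl c 1 0 y + (-(c ![0,0,1])) * sl c 1 1 y = 0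
      rw [sl1c, sl1c]
      rcases fin2 (y 0) with h0 | h0 <;> rcases fin2 (y 1) with h1 | h1 <;> rw [h0, h1]
      · rw [hdiag 0 0, hdiag 1 0]; ring
      · ring
      · rw [show c ![1,0,0] = -c ![0,0,1] from hanti 0 0 1,
          show c ![1,1,0] = -c ![0,1,1] from hanti 1 0 1]
        ring
      · rw [hdiag 0 1, hdiag 1 1]; ring
    obtain ⟨h1, h2⟩ := hIc1 _ _ hcombo
    have h2' : c ![0,0,1] = 0 := by
      have := neg_eq_zero.mp h2
      exact this
    exfalso
    rcases fin2 v with rfl | rfl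
    · apply hv
      rw [show c ![1,0,0] = -c ![0,0,1] from hanti 0 0 1, h2']
      ring
    · apply hv
      rw [show c ![1,1,0] = -c ![0,1,1] from hanti 1 0 1, h1]
      ring

/-- Four symmetric matrices, pairwise-orthogonal pairs: impossible in 3-dim `Sym`. -/
lemma endgame (c d : ι3 → ℂ)
    (hsymc : ∀ b t s : Fin 2, c ![b, t, s] = c ![b, s, t])
    (hsymd : ∀ b t s : Fin 2, d ![b, t, s] = d ![b, s, t])
    (hic : Indep (sl c 0 0) (sl c 0 1)) (hid : Indep (sl d 0 0) (sl d 0 1))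
    (ho : ∀ a b : Fin 2, ⟪sl c 0 a, sl d 0 b⟫_ℂ = 0) : False := by
  classical
  set fam : Fin 4 → V := ![sl c 0 0, sl c 0 1, sl d 0 0, sl d 0 1] with hfam
  have f0 : fam 0 = sl c 0 0 := rfl
  have f1 : fam 1 = sl c 0 1 := rfl
  have f2 : fam 2 = sl d 0 0 := rfl
  have f3 : fam 3 = sl d 0 1 := rfl
  have hslc_sym : ∀ (b t s : Fin 2), sl c 0 b ![t, s] = sl c 0 b ![s, t] := by
    intro b t s
    rw [sl0c, sl0c]
    simpa using hsymc b t s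
  have hsld_sym : ∀ (b t s : Fin 2), sl d 0 b ![t, s] = sl d 0 b ![s, t] := by
    intro b t s
    rw [sl0c, sl0c]
    simpa using hsymd b t s
  set Sym : Submodule ℂ V :=
    { carrier := {v : V | ∀ t s : Fin 2, v ![t, s] = v ![s, t]}
      add_mem' := by
        intro a b ha hb
        intro t s
        show (a + b) ![t, s] = (a + b) ![s, t]
        simp only [PiLp.add_apply]
        rw [ha t s, hb t s]
      zero_mem' := by intro t s; rfl
      smul_mem' := by
        intro r a ha
        intro t s
        show (r • a) ![t, s] = (r • a) ![s, t]
        simp only [PiLp.smul_apply]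
        rw [ha t s] } with hSym
  have hLI : LinearIndependent ℂ fam := by
    rw [Fintype.linearIndependent_iff]
    intro g hg
    rw [Fin.sum_univ_four] at hg
    rw [f0, f1, f2, f3] at hg
    have hg' : (g 0 • sl c 0 0 + g 1 • sl c 0 1) + (g 2 • sl d 0 0 + g 3 • sl d 0 1) = 0 := by
      rw [← hg]; abel
    have hrest : g 0 • sl c 0 0 + g 1 • sl c 0 1 = -(g 2 • sl d 0 0 + g 3 • sl d 0 1) :=
      eq_neg_of_add_eq_zero_left hg'
    have hvv : ⟪g 0 • sl c 0 0 + g 1 • sl c 0 1, g 0 • sl c 0 0 + g 1 • sl c 0 1⟫_ℂ = 0 := by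
      nth_rewrite 2 [hrest]
      rw [inner_neg_right, inner_add_right, inner_smul_right, inner_smul_right,
        inner_add_left, inner_add_left, inner_smul_left, inner_smul_left,
        inner_smul_left, inner_smul_left, ho 0 0, ho 0 1, ho 1 0, ho 1 1]
      ring
    have hv0 : g 0 • sl c 0 0 + g 1 • sl c 0 1 = 0 := inner_self_eq_zero.mp hvv
    obtain ⟨hg0, hg1⟩ := hic _ _ hv0
    have hg23 : g 2 • sl d 0 0 + g 3 • sl d 0 1 = 0 := by
      rw [hv0] at hrest
      exact (neg_eq_zero.mp hrest.symm)
    obtain ⟨hg2, hg3⟩ := hid _ _ hg23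
    intro i
    fin_cases i
    · exact hg0
    · exact hg1
    · exact hg2
    · exact hg3
  set L : V →ₗ[ℂ] (Fin 3 → ℂ) :=
    { toFun := fun v => ![v ![0,0], v ![0,1], v ![1,1]]
      map_add' := by
        intro x y
        funext k
        fin_cases k <;> simp [PiLp.add_apply]
      map_smul' := by
        intro r x
        funext k
        fin_cases k <;> simp [PiLp.smul_apply] } with hL
  have hrange : ∀ i, fam i ∈ Sym := by
    intro i
    fin_cases i
    · exact fun t s => hslc_sym 0 t s
    · exact fun t s => hslc_sym 1 t s
    · exact fun t s => hsld_sym 0 t s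
    · exact fun t s => hsld_sym 1 t s
  have hdisj : Disjoint (Submodule.span ℂ (Set.range fam)) (LinearMap.ker L) := by
    rw [Submodule.disjoint_def]
    intro x hx hker
    have hsub : Submodule.span ℂ (Set.range fam) ≤ Sym := by
      rw [Submodule.span_le]
      rintro z ⟨i, rfl⟩
      exact hrange i
    have hxs : x ∈ Sym := hsub hx
    have hk := LinearMap.mem_ker.mp hker
    have h00 : x ![0,0] = 0 := by have := congrFun hk 0; simpa [hL] using this
    have h01 : x ![0,1] = 0 := by have := congrFun hk 1; simpa [hL] using this
    have h11 : x ![1,1] = 0 := by have := congrFun hk 2; simpa [hL] using this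
    have h10 : x ![1,0] = 0 := by rw [hxs 1 0]; exact h01
    exact ext4 (w := (0 : V)) h00 h01 h10 h11
  have hLIL : LinearIndependent ℂ (⇑L ∘ fam) := hLI.map hdisj
  have hcard := hLIL.fintype_card_le_finrank
  have hfr : Module.finrank ℂ (Fin 3 → ℂ) = 3 := by simp
  rw [hfr] at hcard
  simp at hcard

/-- Step III: the slice package is contradictory. -/
lemma stepIII (c d : ι3 → ℂ)
    (hF1 : ∀ i j : Fin 3, ∀ b bq : Fin 2, ⟪sl c i b, sl d j bq⟫_ℂ = 0)
    (hF1' : ∀ i j : Fin 3, ∀ b bq : Fin 2, ⟪sl d i b, sl c j bq⟫_ℂ = 0)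
    (hF2 : ∀ i j : Fin 3, ∀ b bq : Fin 2,
      ⟪sl c i b, sl c j bq⟫_ℂ = ⟪sl d i b, sl d j bq⟫_ℂ)
    (hnc : (∑ s, conj (c s) * c s) = 1) (hnd : (∑ s, conj (d s) * d s) = 1) : False := by
  classical
  have hF2' : ∀ i j : Fin 3, ∀ b bq : Fin 2,
      ⟪sl d i b, sl d j bq⟫_ℂ = ⟪sl c i b, sl c j bq⟫_ℂ := fun i j b bq => (hF2 i j b bq).symm
  by_cases hc0 : Indep (sl c 0 0) (sl c 0 1)
  · by_cases hc1 : Indep (sl c 1 0) (sl c 1 1)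
    · by_cases hc2 : Indep (sl c 2 0) (sl c 2 1)
      · by_cases hd0 : Indep (sl d 0 0) (sl d 0 1)
        · by_cases hd1 : Indep (sl d 1 0) (sl d 1 1)
          · by_cases hd2 : Indep (sl d 2 0) (sl d 2 1)
            · exact endgame c d
                (symmB c d hc0 hc1 hc2 hd0 (fun l j b => hF1' 0 j l b))
                (symmB d c hd0 hd1 hd2 hc0 (fun l j b => hF1 0 j l b))
                hc0 hd0 (fun a b => hF1 0 0 a b)
            · exact caseA d c hF1' hF1 hF2' hnc 2 hd2
          · exact caseA d c hF1' hF1 hF2' hnc 1 hd1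
        · exact caseA d c hF1' hF1 hF2' hnc 0 hd0
      · exact caseA c d hF1 hF1' hF2 hnd 2 hc2
    · exact caseA c d hF1 hF1' hF2 hnd 1 hc1
  · exact caseA c d hF1 hF1' hF2 hnd 0 hc0

end StepIII

/-- Main: no code. -/
lemma main {E : Matrix ι3 (Fin 2) ℂ} {N : Matrix ι2 ι2 ℂ →ₗ[ℂ] Matrix (Fin 2) (Fin 2) ℂ}
    (hE : Eᴴ * E = 1) (hChoi : (choi N).PosSemidef)
    (hTr : ∀ A, (N A).trace = A.trace)
    (hdec : ∀ φ : Fin 2 → ℂ, (∑ j, star (φ j) * φ j) = 1 →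
      ∀ i : Fin 3, N (ptrace i (E * outer φ φ * Eᴴ)) = outer φ φ) : False := by
  obtain ⟨hF1, hF1', hF2⟩ := slice_package hE hChoi hTr hdec
  exact stepIII (fun s => E s 0) (fun s => E s 1) hF1 hF1' hF2
    (col_norm hE 0) (col_norm hE 1)

end NoDel

/-- there is no `[3,1]` single quantum deletion error-correcting code. -/
theorem no_length_three_deletion_code : ¬ HasDelCode 2 := by
  rintro ⟨E, N, hE, ⟨hChoi, hTr⟩, hdec⟩
  exact NoDel.main hE hChoi hTr hdec

end
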